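/- Let E_0, …, E_{⌊D/2⌋} ∈ Mat_X(ℂ) satisfy Σ_i E_i = I and A·E_i = θ_i·E_i for all 0 ≤ i ≤ ⌊D/2⌋, where θ_i = ((D−2i)² − D)/2 (so they are the primitive idempotents of the halved cube). Then for every x₀ ∈ X and every y ∈ X one has 2^{D−1}·(E_1)_{x₀ y} = D − 2·w(x₀−y). In other words, the dual adjacency matrix A*(x₀) of the halved cube, defined as the diagonal matrix with entries |X|·(E_1)_{x₀ y}, has diagonal entries D − 2·w(x₀−y). -/

import Mathlib

open Matrix

/-- Vertex set of the hypercube `H(D,2)`: binary words of length `D`. -/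
abbrev Vtx (D : ℕ) := Fin D → ZMod 2

/-- Vertex set of the halved cube: binary words of even Hamming weight. -/
abbrev HVtx (D : ℕ) := {x : Vtx D // Even (hammingNorm x)}

/-- Adjacency matrix of the hypercube `H(D,2)`. -/
noncomputable def adjCube (D : ℕ) : Matrix (Vtx D) (Vtx D) ℂ :=
  fun y z => if hammingNorm (y - z) = 1 then 1 else 0

/-- Adjacency matrix of the halved cube `½H(D,2)`. -/
noncomputable def adjHalf (D : ℕ) : Matrix (HVtx D) (HVtx D) ℂ :=
  fun y z => if hammingNorm (y.val - z.val) = 2 then 1 else 0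

open Finset

namespace S13

noncomputable def sgn : ZMod 2 → ℂ := fun a => if a = 0 then 1 else -1

lemma zm2 (a : ZMod 2) : a = 0 ∨ a = 1 := by revert a; decide

noncomputable def chi {D : ℕ} (u v : Vtx D) : ℂ := ∏ k, sgn (u k * v k)

lemma sgn_add (a b : ZMod 2) : sgn (a + b) = sgn a * sgn b := by
  rcases zm2 a with h | h <;> rcases zm2 b with h' | h' <;>
    simp [h, h', sgn, (by decide : (1 + 1 : ZMod 2) = 0), (by decide : (1 : ZMod 2) ≠ 0)]

lemma sgn_zero : sgn 0 = 1 := by simp [sgn]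

lemma chi_add {D : ℕ} (u a b : Vtx D) : chi u (a + b) = chi u a * chi u b := by
  simp only [chi, ← Finset.prod_mul_distrib]
  refine Finset.prod_congr rfl fun k _ => ?_
  rw [Pi.add_apply, mul_add, sgn_add]

lemma chi_add_left {D : ℕ} (u u' v : Vtx D) : chi (u + u') v = chi u v * chi u' v := by
  simp only [chi, ← Finset.prod_mul_distrib]
  refine Finset.prod_congr rfl fun k _ => ?_
  rw [Pi.add_apply, add_mul, sgn_add]

lemma chi_zero {D : ℕ} (u : Vtx D) : chi u 0 = 1 := by simp [chi, sgn_zero]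

lemma chi_single {D : ℕ} (u : Vtx D) (k : Fin D) : chi u (Pi.single k 1) = sgn (u k) := by
  rw [chi]
  rw [Finset.prod_eq_single_of_mem k (Finset.mem_univ k)]
  · simp
  · intro m _ hm; rw [Pi.single_eq_of_ne hm, mul_zero, sgn_zero]

lemma sub_eq_add' {D : ℕ} (a b : Vtx D) : a - b = a + b := by
  funext k; rw [Pi.sub_apply, Pi.add_apply]
  rcases zm2 (a k) with h|h <;> rcases zm2 (b k) with h'|h' <;> rw [h, h'] <;> decide

lemma add_self' {D : ℕ} (a : Vtx D) : a + a = 0 := by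
  funext k; rw [Pi.add_apply]; rcases zm2 (a k) with h|h <;> simp [h] ; decide

lemma norm_cast_zmod {D : ℕ} (v : Vtx D) : ((hammingNorm v : ZMod 2)) = ∑ k, v k := by
  rw [hammingNorm, ← Finset.sum_boole]
  refine Finset.sum_congr rfl fun k _ => ?_
  rcases zm2 (v k) with h|h <;> simp [h]

lemma even_iff_cast {w : ℕ} : Even w ↔ ((w : ZMod 2)) = 0 := by
  rw [even_iff_two_dvd, ← ZMod.natCast_eq_zero_iff]

lemma even_add {D : ℕ} (a b : Vtx D) (ha : Even (hammingNorm a)) (hb : Even (hammingNorm b)) :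
    Even (hammingNorm (a + b)) := by
  rw [even_iff_cast] at ha hb ⊢
  rw [norm_cast_zmod] at ha hb ⊢
  simp only [Pi.add_apply, Finset.sum_add_distrib, ha, hb, add_zero]

lemma sum_sgn {D : ℕ} (u : Vtx D) : ∑ k, sgn (u k) = (D : ℂ) - 2 * hammingNorm u := by
  have : ∀ k, sgn (u k) = 1 - 2 * (if u k ≠ 0 then 1 else 0) := by
    intro k; rcases zm2 (u k) with h|h <;>
      simp [h, sgn, (by decide : (1:ZMod 2) ≠ 0)] <;> try ring
  rw [Finset.sum_congr rfl fun k _ => this k]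
  rw [Finset.sum_sub_distrib, ← Finset.mul_sum, Finset.sum_boole, hammingNorm]
  simp [Finset.card_univ]

lemma prod_sgn {D : ℕ} (v : Vtx D) : ∏ k, sgn (v k) = (-1 : ℂ) ^ hammingNorm v := by
  have : ∀ k, sgn (v k) = (-1 : ℂ) ^ (if v k ≠ 0 then 1 else 0) := by
    intro k; rcases zm2 (v k) with h|h <;> simp [h, sgn, (by decide : (1:ZMod 2) ≠ 0)]
  rw [Finset.prod_congr rfl fun k _ => this k, Finset.prod_pow_eq_pow_sum, Finset.sum_boole,
    hammingNorm]
  norm_num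

lemma chi_one {D : ℕ} (v : Vtx D) (hv : Even (hammingNorm v)) : chi 1 v = 1 := by
  have : chi (1 : Vtx D) v = ∏ k, sgn (v k) := by
    refine Finset.prod_congr rfl fun k _ => ?_; rw [Pi.one_apply, one_mul]
  rw [this, prod_sgn, hv.neg_one_pow]


lemma chi_comm {D : ℕ} (u v : Vtx D) : chi u v = chi v u := by
  refine Finset.prod_congr rfl fun k _ => ?_; rw [mul_comm]

/-- standard basis vector -/
def eV {D : ℕ} (k : Fin D) : Vtx D := Pi.single k 1

lemma eV_apply {D : ℕ} (k m : Fin D) : eV k m = if m = k then 1 else 0 := by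
  by_cases h : m = k
  · subst h; simp [eV]
  · simp [eV, Pi.single_eq_of_ne h, h]

lemma chi_eV {D : ℕ} (u : Vtx D) (k : Fin D) : chi u (eV k) = sgn (u k) := by
  rw [chi, Finset.prod_eq_single_of_mem k (Finset.mem_univ k)]
  · simp [eV_apply]
  · intro m _ hm; simp [eV_apply, hm, sgn]

lemma pair_apply {D : ℕ} {k l : Fin D} (m : Fin D) :
    (eV k + eV l) m = (if m = k then 1 else 0) + (if m = l then 1 else 0) := by
  rw [Pi.add_apply, eV_apply, eV_apply]

lemma norm_pair {D : ℕ} {k l : Fin D} (hkl : k ≠ l) :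
    hammingNorm (eV k + eV l) = 2 := by
  rw [hammingNorm]
  have : (univ.filter fun m => (eV k + eV l) m ≠ 0) = ({k, l} : Finset (Fin D)) := by
    ext m
    simp only [mem_filter, mem_univ, true_and, pair_apply, mem_insert, mem_singleton]
    by_cases h1 : m = k <;> by_cases h2 : m = l <;> simp_all <;> decide
  rw [this, Finset.card_insert_of_notMem (by simpa using hkl), Finset.card_singleton]

lemma norm_eV {D : ℕ} (k : Fin D) : hammingNorm (eV k : Vtx D) = 1 := by
  rw [hammingNorm]
  have : (univ.filter fun m => (eV k : Vtx D) m ≠ 0) = ({k} : Finset (Fin D)) := by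
    ext m
    simp only [mem_filter, mem_univ, true_and, eV_apply, mem_singleton]
    by_cases h1 : m = k <;> simp_all <;> decide
  rw [this, Finset.card_singleton]

lemma eq_pair_of_norm_two {D : ℕ} {d : Vtx D} (hd : hammingNorm d = 2) :
    ∃ k l, k ≠ l ∧ d = eV k + eV l := by
  rw [hammingNorm, Finset.card_eq_two] at hd
  obtain ⟨k, l, hkl, hs⟩ := hd
  refine ⟨k, l, hkl, funext fun m => ?_⟩
  have hm : d m ≠ 0 ↔ (m = k ∨ m = l) := by
    constructor
    · intro h
      have : m ∈ univ.filter fun i => d i ≠ 0 := by simp [h]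
      rw [hs] at this; simpa using this
    · intro h
      have : m ∈ ({k, l} : Finset (Fin D)) := by simpa using h
      rw [← hs] at this; simpa using this
  rw [pair_apply]
  by_cases h1 : m = k
  · subst h1
    rcases zm2 (d m) with h0|h0
    · exact absurd (hm.mpr (Or.inl rfl)) (by simp [h0])
    · simp [h0, hkl]
  · by_cases h2 : m = l
    · subst h2
      rcases zm2 (d m) with h0|h0
      · exact absurd (hm.mpr (Or.inr rfl)) (by simp [h0])
      · simp [h0, h1]
    · have : d m = 0 := by
        by_contra h0; rcases hm.mp h0 with h|h; exact h1 h; exact h2 h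
      simp [this, h1, h2]

lemma eq_eV_of_norm_one {D : ℕ} {u : Vtx D} (hu : hammingNorm u = 1) :
    ∃ k, u = eV k := by
  rw [hammingNorm, Finset.card_eq_one] at hu
  obtain ⟨k, hs⟩ := hu
  refine ⟨k, funext fun m => ?_⟩
  have hm : u m ≠ 0 ↔ m = k := by
    constructor
    · intro h
      have : m ∈ univ.filter fun i => u i ≠ 0 := by simp [h]
      rw [hs] at this; simpa using this
    · intro h
      have : m ∈ ({k} : Finset (Fin D)) := by simpa using h
      rw [← hs] at this; simpa using this
  rw [eV_apply]
  by_cases h1 : m = k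
  · subst h1
    rcases zm2 (u m) with h0|h0
    · exact absurd (hm.mpr rfl) (by simp [h0])
    · simp [h0]
  · have : u m = 0 := by by_contra h0; exact h1 (hm.mp h0)
    simp [this, h1]

lemma eV_injective {D : ℕ} : Function.Injective (eV (D := D)) := by
  intro k l h
  by_contra hkl
  have := congrFun h k
  rw [eV_apply, eV_apply, if_pos rfl, if_neg hkl] at this
  exact (by decide : (1:ZMod 2) ≠ 0) this

lemma sum_w1 {D : ℕ} (v : Vtx D) :
    ∑ u ∈ univ.filter (fun u : Vtx D => hammingNorm u = 1), chi u v
      = (D : ℂ) - 2 * hammingNorm v := by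
  rw [← sum_sgn v]
  refine (Finset.sum_nbij (fun k => eV k) ?_ ?_ ?_ ?_).symm
  · intro k _; simp [norm_eV]
  · intro k _ l _ h; exact eV_injective h
  · intro u hu
    obtain ⟨k, hk⟩ := eq_eV_of_norm_one (by simpa using (Finset.mem_filter.mp hu).2)
    exact ⟨k, by simp, hk.symm⟩
  · intro k _; rw [chi_comm, chi_eV]

lemma sum_w2 {D : ℕ} (u : Vtx D) :
    ∑ d ∈ univ.filter (fun d : Vtx D => hammingNorm d = 2), chi u d
      = (((D:ℂ) - 2 * hammingNorm u) ^ 2 - D) / 2 := by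
  have key : (∑ k, sgn (u k)) ^ 2 - D
      = 2 * ∑ d ∈ univ.filter (fun d : Vtx D => hammingNorm d = 2), chi u d := by
    have sq : (∑ k, sgn (u k)) ^ 2
        = ∑ p ∈ (univ : Finset (Fin D ×  Fin D)), sgn (u p.1) * sgn (u p.2) := by
      rw [sq, Finset.sum_mul_sum, ← Finset.univ_product_univ, Finset.sum_product]
    have hsplit : (univ : Finset (Fin D × Fin D)) = univ.diag ∪ univ.offDiag := by
      rw [Finset.diag_union_offDiag]; exact Finset.univ_product_univ.symm
    rw [sq, hsplit, Finset.sum_union (Finset.disjoint_diag_offDiag univ)]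
    have hdiag : ∑ p ∈ (univ : Finset (Fin D)).diag, sgn (u p.1) * sgn (u p.2) = D := by
      rw [Finset.sum_diag]
      have : ∀ k : Fin D, sgn (u k) * sgn (u k) = 1 := by
        intro k; rcases zm2 (u k) with h|h <;> simp [h, sgn, (by decide : (1:ZMod 2) ≠ 0)]
      simp [this, Finset.card_univ]
    rw [hdiag]
    have hoff : ∑ p ∈ (univ : Finset (Fin D)).offDiag, sgn (u p.1) * sgn (u p.2)
        = 2 * ∑ d ∈ univ.filter (fun d : Vtx D => hammingNorm d = 2), chi u d := by
      have hval : ∀ p ∈ (univ : Finset (Fin D)).offDiag,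
          sgn (u p.1) * sgn (u p.2) = chi u (eV p.1 + eV p.2) := by
        intro p _; rw [chi_add, chi_eV, chi_eV]
      rw [Finset.sum_congr rfl hval]
      have hcomp : ∑ p ∈ (univ : Finset (Fin D)).offDiag, chi u (eV p.1 + eV p.2)
          = ∑ b ∈ ((univ : Finset (Fin D)).offDiag).image
              (fun p : Fin D × Fin D => eV p.1 + eV p.2),
            (((univ : Finset (Fin D)).offDiag).filter
              (fun p => eV p.1 + eV p.2 = b)).card • chi u b :=
        Finset.sum_comp _ _
      rw [hcomp]
      have himg : ((univ : Finset (Fin D)).offDiag).image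
          (fun p : Fin D × Fin D => eV p.1 + eV p.2)
          = univ.filter (fun d : Vtx D => hammingNorm d = 2) := by
        ext d
        constructor
        · intro hd
          obtain ⟨p, hp, rfl⟩ := Finset.mem_image.mp hd
          have hne := (Finset.mem_offDiag.mp hp).2.2
          simp [norm_pair hne]
        · intro hd
          obtain ⟨k, l, hkl, rfl⟩ := eq_pair_of_norm_two (by simpa using hd)
          exact Finset.mem_image.mpr ⟨(k, l),
            Finset.mem_offDiag.mpr ⟨mem_univ _, mem_univ _, hkl⟩, rfl⟩
      rw [himg, Finset.mul_sum]
      refine Finset.sum_congr rfl fun d hd => ?_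
      obtain ⟨k, l, hkl, rfl⟩ := eq_pair_of_norm_two (by simpa using hd)
      have hfib : ((univ : Finset (Fin D)).offDiag).filter
          (fun p : Fin D × Fin D => eV p.1 + eV p.2 = eV k + eV l)
          = {(k, l), (l, k)} := by
        ext p
        constructor
        · intro hp
          obtain ⟨hpo, heq⟩ := Finset.mem_filter.mp hp
          have hne : p.1 ≠ p.2 := (Finset.mem_offDiag.mp hpo).2.2
          have hval1 : ∀ m : Fin D, (m = p.1 ∨ m = p.2) → (m = k ∨ m = l) := by
            intro m hm
            have := congrFun heq m
            rw [pair_apply, pair_apply] at this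
            by_contra hc; push_neg at hc
            rw [if_neg hc.1, if_neg hc.2, add_zero] at this
            rcases hm with rfl|rfl
            · rw [if_pos rfl, if_neg hne, add_zero] at this
              exact (by decide : (1:ZMod 2) ≠ 0) this
            · rw [if_neg (fun h => hne h.symm), if_pos rfl, zero_add] at this
              exact (by decide : (1:ZMod 2) ≠ 0) this
          have hp1 := hval1 p.1 (Or.inl rfl)
          have hp2 := hval1 p.2 (Or.inr rfl)
          have : p = (k, l) ∨ p = (l, k) := by
            rcases hp1 with h|h <;> rcases hp2 with h'|h'
            · exact absurd (h.trans h'.symm) hne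
            · left; exact Prod.ext h h'
            · right; exact Prod.ext h h'
            · exact absurd (h.trans h'.symm) hne
          simpa using this
        · intro hp
          rcases Finset.mem_insert.mp hp with rfl | hp
          · exact Finset.mem_filter.mpr
              ⟨Finset.mem_offDiag.mpr ⟨mem_univ _, mem_univ _, hkl⟩, rfl⟩
          · rw [Finset.mem_singleton] at hp; subst hp
            exact Finset.mem_filter.mpr
              ⟨Finset.mem_offDiag.mpr ⟨mem_univ _, mem_univ _, hkl.symm⟩, add_comm _ _⟩
      rw [hfib, Finset.card_insert_of_notMem (by simp [hkl]), Finset.card_singleton]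
      simp [nsmul_eq_mul]
    rw [hoff]; ring
  rw [← sum_sgn u]
  rw [eq_div_iff (by norm_num : (2:ℂ) ≠ 0), mul_comm, ← key]

lemma norm_le {D : ℕ} (u : Vtx D) : hammingNorm u ≤ D := by
  simpa using hammingNorm_le_card_fintype (x := u)

/-- character matrix -/
noncomputable def Pmat {D : ℕ} (u : Vtx D) : Matrix (HVtx D) (HVtx D) ℂ :=
  fun x y => chi u (x.val + y.val)

noncomputable def θ (D i : ℕ) : ℂ := (((D : ℂ) - 2 * i) ^ 2 - D) / 2

lemma sum_chi {D : ℕ} (v : Vtx D) :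
    ∑ u : Vtx D, chi u v = if v = 0 then (2:ℂ)^D else 0 := by
  have h1 : ∑ u : Vtx D, chi u v = ∏ k, ∑ a : ZMod 2, sgn (a * v k) := by
    rw [Finset.prod_univ_sum]
    refine Finset.sum_nbij' (fun u => u) (fun u => u) ?_ ?_ ?_ ?_ ?_ <;> intros <;> simp [chi]
  rw [h1]
  by_cases hv : v = 0
  · subst hv
    simp [sgn, (by decide : ∀ a : ZMod 2, a * 0 = 0)]
  · have : ∃ k, v k ≠ 0 := by
      by_contra h; push_neg at h; exact hv (funext fun k => h k)
    obtain ⟨k, hk⟩ := this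
    rw [if_neg hv]
    refine Finset.prod_eq_zero (Finset.mem_univ k) ?_
    have hvk : v k = 1 := (zm2 (v k)).resolve_left hk
    rw [hvk]
    have h2 : ∑ a : ZMod 2, sgn (a * 1) = sgn (0 * 1) + sgn (1 * 1) := Fin.sum_univ_two _
    rw [h2]
    simp [sgn, (by decide : (1 : ZMod 2) * 1 ≠ 0)]

lemma adj_mul_Pmat {D : ℕ} (u : Vtx D) :
    adjHalf D * Pmat u = ((((D:ℂ) - 2 * hammingNorm u) ^ 2 - D) / 2) • Pmat u := by
  ext x y
  rw [Matrix.mul_apply, Matrix.smul_apply]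
  have hterm : ∀ z : HVtx D,
      adjHalf D x z * Pmat u z y
        = ((if hammingNorm (x.val + z.val) = 2 then 1 else 0) * chi u (x.val + z.val))
            * chi u (x.val + y.val) := by
    intro z
    rw [adjHalf, Pmat, sub_eq_add']
    have : chi u (z.val + y.val) = chi u (x.val + z.val) * chi u (x.val + y.val) := by
      rw [← chi_add]
      congr 1
      have : x.val + z.val + (x.val + y.val) = z.val + y.val := by
        rw [show x.val + z.val + (x.val + y.val) = x.val + x.val + (z.val + y.val) by ring,
          add_self', zero_add]
      rw [this]
    rw [this]; ring
  rw [Finset.sum_congr rfl fun z _ => hterm z, ← Finset.sum_mul]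
  have hsum : ∑ z : HVtx D,
      (if hammingNorm (x.val + z.val) = 2 then 1 else 0) * chi u (x.val + z.val)
      = ∑ d ∈ univ.filter (fun d : Vtx D => hammingNorm d = 2), chi u d := by
    have e1 : ∑ z : HVtx D,
        (if hammingNorm (x.val + z.val) = 2 then (1:ℂ) else 0) * chi u (x.val + z.val)
        = ∑ v ∈ univ.filter (fun v : Vtx D => Even (hammingNorm v)),
            (if hammingNorm (x.val + v) = 2 then (1:ℂ) else 0) * chi u (x.val + v) := by
      exact (Finset.sum_subtype (univ.filter (fun v : Vtx D => Even (hammingNorm v)))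
        (fun v => by simp)
        (fun v => (if hammingNorm (x.val + v) = 2 then (1:ℂ) else 0) * chi u (x.val + v))).symm
    rw [e1, Finset.sum_filter]
    have e2 : ∑ v : Vtx D, (if Even (hammingNorm v) then
        (if hammingNorm (x.val + v) = 2 then (1:ℂ) else 0) * chi u (x.val + v) else 0)
        = ∑ d : Vtx D, (if Even (hammingNorm (x.val + d)) then
        (if hammingNorm (x.val + (x.val + d)) = 2 then (1:ℂ) else 0) * chi u (x.val + (x.val + d))
          else 0) := by
      exact Fintype.sum_equiv (Equiv.addLeft x.val)
        (fun d => if Even (hammingNorm (x.val + d)) then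
          (if hammingNorm (x.val + (x.val + d)) = 2 then (1:ℂ) else 0) * chi u (x.val + (x.val + d))
          else 0)
        (fun v => if Even (hammingNorm v) then
          (if hammingNorm (x.val + v) = 2 then (1:ℂ) else 0) * chi u (x.val + v) else 0)
        (fun d => by rfl) |>.symm
    rw [e2]
    have hxx : ∀ d : Vtx D, x.val + (x.val + d) = d := by
      intro d; rw [← add_assoc, add_self', zero_add]
    have e3 : ∀ d : Vtx D, (if Even (hammingNorm (x.val + d)) then
        (if hammingNorm (x.val + (x.val + d)) = 2 then (1:ℂ) else 0) * chi u (x.val + (x.val + d))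
          else 0) = if hammingNorm d = 2 then chi u d else 0 := by
      intro d
      rw [hxx d]
      by_cases hd : hammingNorm d = 2
      · have heven : Even (hammingNorm (x.val + d)) :=
          even_add _ _ x.2 (by rw [hd]; exact even_two)
        simp [hd, heven]
      · by_cases he : Even (hammingNorm (x.val + d)) <;> simp [hd, he]
    rw [Finset.sum_congr rfl fun d _ => e3 d, ← Finset.sum_filter]
  rw [hsum, sum_w2, Pmat]
  rw [smul_eq_mul]

lemma adjHalf_symm {D : ℕ} : (adjHalf D)ᵀ = adjHalf D := by
  ext x y
  rw [Matrix.transpose_apply, adjHalf, adjHalf, sub_eq_add', sub_eq_add', add_comm]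

lemma Pmat_symm {D : ℕ} (u : Vtx D) : (Pmat u)ᵀ = Pmat u := by
  ext x y
  rw [Matrix.transpose_apply, Pmat, Pmat, add_comm]

lemma Pmat_mul_adj {D : ℕ} (u : Vtx D) :
    Pmat u * adjHalf D = ((((D:ℂ) - 2 * hammingNorm u) ^ 2 - D) / 2) • Pmat u := by
  have h := congrArg Matrix.transpose (adj_mul_Pmat u)
  rw [Matrix.transpose_mul, Matrix.transpose_smul, adjHalf_symm, Pmat_symm] at h
  exact h

/-- class of vectors with given folded weight -/
noncomputable def cls (D i : ℕ) : Finset (Vtx D) :=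
  univ.filter (fun u => min (hammingNorm u) (D - hammingNorm u) = i)

noncomputable def F (D i : ℕ) : Matrix (HVtx D) (HVtx D) ℂ :=
  ((2:ℂ)^D)⁻¹ • ∑ u ∈ cls D i, Pmat u

lemma theta_of_mem_cls {D i : ℕ} {u : Vtx D} (hu : u ∈ cls D i) :
    (((D:ℂ) - 2 * hammingNorm u) ^ 2 - D) / 2 = θ D i := by
  have hle := norm_le u
  have hmin : min (hammingNorm u) (D - hammingNorm u) = i := by
    simpa [cls] using hu
  rw [θ]
  congr 1
  set w := hammingNorm u with hw
  rcases le_total w (D - w) with h | h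
  · rw [min_eq_left h] at hmin
    rw [← hmin]
  · rw [min_eq_right h] at hmin
    have hi : (i : ℂ) = (D : ℂ) - w := by
      rw [← hmin, Nat.cast_sub hle]
    rw [hi]; ring

lemma adj_mul_F {D i : ℕ} : adjHalf D * F D i = θ D i • F D i := by
  rw [F, Matrix.mul_smul, Finset.mul_sum, smul_comm]
  congr 1
  rw [Finset.smul_sum]
  refine Finset.sum_congr rfl fun u hu => ?_
  rw [adj_mul_Pmat u, theta_of_mem_cls hu]

lemma F_mul_adj {D i : ℕ} : F D i * adjHalf D = θ D i • F D i := by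
  rw [F, Matrix.smul_mul, Finset.sum_mul, smul_comm]
  congr 1
  rw [Finset.smul_sum]
  refine Finset.sum_congr rfl fun u hu => ?_
  rw [Pmat_mul_adj u, theta_of_mem_cls hu]

lemma F_sum {D : ℕ} : ∑ i ∈ Finset.range (D / 2 + 1), F D i = 1 := by
  have h1 : ∑ i ∈ Finset.range (D / 2 + 1), ∑ u ∈ cls D i, Pmat u
      = ∑ u : Vtx D, Pmat u := by
    refine Finset.sum_fiberwise_of_maps_to ?_ _
    intro u _
    rw [Finset.mem_range]
    have := norm_le u
    omega
  have h2 : ∑ u : Vtx D, Pmat u = ((2:ℂ)^D) • (1 : Matrix (HVtx D) (HVtx D) ℂ) := by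
    ext x y
    rw [Matrix.sum_apply, Matrix.smul_apply]
    have : ∀ u : Vtx D, Pmat u x y = chi u (x.val + y.val) := fun u => rfl
    rw [Finset.sum_congr rfl fun u _ => this u, sum_chi]
    by_cases hxy : x = y
    · subst hxy
      rw [if_pos (add_self' _), Matrix.one_apply_eq, smul_eq_mul, mul_one]
    · have hne : x.val + y.val ≠ 0 := by
        intro h
        apply hxy
        apply Subtype.ext
        have := congrArg (fun v => v + y.val) h
        simpa [add_assoc, add_self'] using this
      rw [if_neg hne, Matrix.one_apply_ne hxy, smul_eq_mul, mul_zero]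
  have h3 : ∑ i ∈ Finset.range (D / 2 + 1), F D i
      = ((2:ℂ)^D)⁻¹ • ∑ i ∈ Finset.range (D / 2 + 1), ∑ u ∈ cls D i, Pmat u := by
    rw [Finset.smul_sum]
    exact Finset.sum_congr rfl fun i _ => rfl
  rw [h3, h1, h2, smul_smul, inv_mul_cancel₀ (by norm_num : ((2:ℂ)^D) ≠ 0), one_smul]


lemma theta_inj {D : ℕ} {i j : ℕ} (hi : i ≤ D / 2) (hj : j ≤ D / 2)
    (h : θ D i = θ D j) : i = j := by
  have h2i : 2 * i ≤ D := by omega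
  have h2j : 2 * j ≤ D := by omega
  have hci : (D : ℂ) - 2 * i = ((D - 2 * i : ℕ) : ℂ) := by push_cast [Nat.cast_sub h2i]; ring
  have hcj : (D : ℂ) - 2 * j = ((D - 2 * j : ℕ) : ℂ) := by push_cast [Nat.cast_sub h2j]; ring
  rw [θ, θ, div_eq_div_iff (by norm_num) (by norm_num), hci, hcj] at h
  have h' : (((D - 2 * i) ^ 2 : ℕ) : ℂ) = (((D - 2 * j) ^ 2 : ℕ) : ℂ) := by
    push_cast
    have := h
    ring_nf at this ⊢
    linear_combination this / 2
  have hnat : (D - 2 * i) ^ 2 = (D - 2 * j) ^ 2 := Nat.cast_injective h'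
  have : D - 2 * i = D - 2 * j := by nlinarith [hnat]
  omega


lemma one_apply' {D : ℕ} (k : Fin D) : (1 : Vtx D) k = 1 := rfl

lemma norm_add_one {D : ℕ} (u : Vtx D) : hammingNorm (u + 1) = D - hammingNorm u := by
  have hset : (univ.filter fun k => (u + 1) k ≠ 0)
      = univ \ (univ.filter fun k => u k ≠ 0) := by
    ext k
    simp only [mem_filter, mem_univ, true_and, mem_sdiff, Pi.add_apply, one_apply']
    rcases zm2 (u k) with h|h <;> simp [h] <;> decide
  rw [hammingNorm, hammingNorm, hset, Finset.card_sdiff_of_subset (Finset.filter_subset _ _)]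
  simp

lemma one_add_one {D : ℕ} : (1 : Vtx D) + 1 = 0 := add_self' 1

lemma cls_one {D : ℕ} (hD : 3 ≤ D) :
    cls D 1 = (univ.filter fun u : Vtx D => hammingNorm u = 1)
      ∪ (univ.filter fun u : Vtx D => hammingNorm u = D - 1) := by
  ext u
  have := norm_le u
  simp only [cls, mem_filter, mem_univ, true_and, mem_union]
  omega

lemma sum_cls_one {D : ℕ} (hD : 3 ≤ D) (v : Vtx D) (hv : Even (hammingNorm v)) :
    ∑ u ∈ cls D 1, chi u v = 2 * ((D : ℂ) - 2 * hammingNorm v) := by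
  rw [cls_one hD]
  have hdisj : Disjoint (univ.filter fun u : Vtx D => hammingNorm u = 1)
      (univ.filter fun u : Vtx D => hammingNorm u = D - 1) := by
    rw [Finset.disjoint_left]
    intro u h1 h2
    simp only [mem_filter, mem_univ, true_and] at h1 h2
    omega
  rw [Finset.sum_union hdisj, sum_w1]
  have h2 : ∑ u ∈ univ.filter (fun u : Vtx D => hammingNorm u = D - 1), chi u v
      = ∑ u ∈ univ.filter (fun u : Vtx D => hammingNorm u = 1), chi u v := by
    refine Finset.sum_nbij' (fun u => u + 1) (fun u => u + 1) ?_ ?_ ?_ ?_ ?_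
    · intro u hu
      simp only [mem_filter, mem_univ, true_and] at hu ⊢
      rw [norm_add_one, hu]
      have := norm_le u
      omega
    · intro u hu
      simp only [mem_filter, mem_univ, true_and] at hu ⊢
      rw [norm_add_one, hu]
    · intro u _; show u + 1 + 1 = u; rw [add_assoc, one_add_one, add_zero]
    · intro u _; show u + 1 + 1 = u; rw [add_assoc, one_add_one, add_zero]
    · intro u _
      rw [chi_add_left, chi_one v hv, mul_one]
  rw [h2, sum_w1]
  ring

lemma F_one_apply {D : ℕ} (hD : 3 ≤ D) (x y : HVtx D) :
    F D 1 x y = ((2:ℂ)^D)⁻¹ * (2 * ((D:ℂ) - 2 * hammingNorm (x.val + y.val))) := by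
  rw [F, Matrix.smul_apply, Matrix.sum_apply, smul_eq_mul]
  congr 1
  exact sum_cls_one hD _ (even_add _ _ x.2 y.2)

end S13

theorem stmt13 (D : ℕ) (hD : 3 ≤ D)
    (E : ℕ → Matrix (HVtx D) (HVtx D) ℂ)
    (hsum : ∑ i ∈ Finset.range (D / 2 + 1), E i = 1)
    (heig : ∀ i ≤ D / 2,
      adjHalf D * E i = (((((D : ℂ) - 2 * i)) ^ 2 - D) / 2) • E i) :
    ∀ x₀ y : HVtx D,
      (2 ^ (D - 1) : ℂ) * E 1 x₀ y = (D : ℂ) - 2 * hammingNorm (x₀.val - y.val) := by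
  classical
  have h1mem : (1 : ℕ) ∈ Finset.range (D / 2 + 1) := by
    rw [Finset.mem_range]; omega
  have heig' : ∀ i ≤ D / 2, adjHalf D * E i = S13.θ D i • E i := by
    intro i hi; rw [S13.θ]; exact heig i hi
  -- E 1 = F D 1
  have hFE : ∀ j ∈ Finset.range (D / 2 + 1), j ≠ 1 → S13.F D 1 * E j = 0 := by
    intro j hj hj1
    rw [Finset.mem_range] at hj
    have hjj : j ≤ D / 2 := by omega
    have h1 : S13.θ D 1 • (S13.F D 1 * E j) = S13.θ D j • (S13.F D 1 * E j) := by
      calc S13.θ D 1 • (S13.F D 1 * E j)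
          = (S13.θ D 1 • S13.F D 1) * E j := by rw [Matrix.smul_mul]
        _ = (S13.F D 1 * adjHalf D) * E j := by rw [S13.F_mul_adj]
        _ = S13.F D 1 * (adjHalf D * E j) := by rw [Matrix.mul_assoc]
        _ = S13.F D 1 * (S13.θ D j • E j) := by rw [heig' j hjj]
        _ = S13.θ D j • (S13.F D 1 * E j) := by rw [Matrix.mul_smul]
    have hne : S13.θ D 1 - S13.θ D j ≠ 0 := by
      intro h
      exact hj1 (S13.theta_inj (i := 1) (j := j) (by omega) hjj (by linear_combination h)).symm
    have := sub_eq_zero.mpr h1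
    rw [← sub_smul] at this
    rcases smul_eq_zero.mp this with h | h
    · exact absurd h hne
    · exact h
  have hEF : ∀ i ∈ Finset.range (D / 2 + 1), i ≠ 1 → S13.F D i * E 1 = 0 := by
    intro i hi hi1
    rw [Finset.mem_range] at hi
    have hii : i ≤ D / 2 := by omega
    have h1 : S13.θ D i • (S13.F D i * E 1) = S13.θ D 1 • (S13.F D i * E 1) := by
      calc S13.θ D i • (S13.F D i * E 1)
          = (S13.θ D i • S13.F D i) * E 1 := by rw [Matrix.smul_mul]
        _ = (S13.F D i * adjHalf D) * E 1 := by rw [S13.F_mul_adj]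
        _ = S13.F D i * (adjHalf D * E 1) := by rw [Matrix.mul_assoc]
        _ = S13.F D i * (S13.θ D 1 • E 1) := by rw [heig' 1 (by omega)]
        _ = S13.θ D 1 • (S13.F D i * E 1) := by rw [Matrix.mul_smul]
    have hne : S13.θ D i - S13.θ D 1 ≠ 0 := by
      intro h
      exact hi1 (S13.theta_inj (i := i) (j := 1) hii (by omega) (by linear_combination h))
    have := sub_eq_zero.mpr h1
    rw [← sub_smul] at this
    rcases smul_eq_zero.mp this with h | h
    · exact absurd h hne
    · exact h
  have key : E 1 = S13.F D 1 := by
    have hA : S13.F D 1 = S13.F D 1 * E 1 := by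
      calc S13.F D 1 = S13.F D 1 * 1 := by rw [Matrix.mul_one]
        _ = S13.F D 1 * ∑ j ∈ Finset.range (D / 2 + 1), E j := by rw [hsum]
        _ = ∑ j ∈ Finset.range (D / 2 + 1), S13.F D 1 * E j := by rw [Finset.mul_sum]
        _ = S13.F D 1 * E 1 := Finset.sum_eq_single_of_mem 1 h1mem
            (fun j hj hj1 => hFE j hj hj1)
    have hB : E 1 = S13.F D 1 * E 1 := by
      calc E 1 = 1 * E 1 := by rw [Matrix.one_mul]
        _ = (∑ i ∈ Finset.range (D / 2 + 1), S13.F D i) * E 1 := by rw [S13.F_sum]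
        _ = ∑ i ∈ Finset.range (D / 2 + 1), S13.F D i * E 1 := by rw [Finset.sum_mul]
        _ = S13.F D 1 * E 1 := Finset.sum_eq_single_of_mem 1 h1mem
            (fun i hi hi1 => hEF i hi hi1)
    rw [hB, ← hA]
  intro x₀ y
  rw [key, S13.F_one_apply hD, S13.sub_eq_add']
  have hpow : (2:ℂ) ^ (D - 1) * ((2:ℂ)^D)⁻¹ * 2 = 1 := by
    rw [show D = (D - 1) + 1 by omega, pow_succ]
    field_simp
    simp
  calc (2:ℂ) ^ (D - 1) * (((2:ℂ)^D)⁻¹ * (2 * ((D:ℂ) - 2 * hammingNorm (x₀.val + y.val))))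
      = ((2:ℂ) ^ (D - 1) * ((2:ℂ)^D)⁻¹ * 2) * ((D:ℂ) - 2 * hammingNorm (x₀.val + y.val)) := by
        ring
    _ = (D:ℂ) - 2 * hammingNorm (x₀.val + y.val) := by rw [hpow, one_mul]
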